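/- arXiv:0907.0302 — 3 statements merged into one kernel-verified Lean document; each statement's English description precedes it below -/
import Mathlib

section
/- Let R be a commutative ring, δ ⊆ ℕ^n a finite standard set, and ≺ a monomial order on ℕ^n. Suppose for each corner α ∈ 𝒞(δ) we are given a monic polynomial f_α ∈ R[x_1,…,x_n] with leading exponent α (with respect to ≺) all of whose non-leading exponents lie in δ. Let I be the ideal generated by the f_α. Then for every α ∈ ℕ^n \ δ there exists a polynomial g_α ∈ I of the form g_α = x^α + Σ_{β ∈ δ} c_β x^β. -/
/-- A monomial order on ℕ^n (exponents as finitely supported functions): a total,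
transitive, irreflexive order compatible with addition in which 0 is minimal. -/
structure MonOrd (n : ℕ) where
  lt : (Fin n →₀ ℕ) → (Fin n →₀ ℕ) → Prop
  lt_trans : ∀ {a b c}, lt a b → lt b c → lt a c
  lt_irrefl : ∀ a, ¬ lt a a
  lt_total : ∀ a b, lt a b ∨ a = b ∨ lt b a
  add_right : ∀ {a b} (c), lt a b → lt (a + c) (b + c)
  zero_min : ∀ a, a ≠ 0 → lt 0 a

/-- A standard set in ℕ^n: its complement is closed under addition of elements of ℕ^n. -/
def StdSet {n : ℕ} (δ : Set (Fin n →₀ ℕ)) : Prop :=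
  ∀ α ∉ δ, ∀ γ : Fin n →₀ ℕ, α + γ ∉ δ

/-- A corner of δ: an element outside δ all of whose predecessors (when they exist in ℕ^n)
lie in δ. -/
def StdCorner {n : ℕ} (δ : Set (Fin n →₀ ℕ)) (α : Fin n →₀ ℕ) : Prop :=
  α ∉ δ ∧ ∀ (i : Fin n) (β : Fin n →₀ ℕ), β + Finsupp.single i 1 = α → β ∈ δ

/-- The border of δ: elements outside δ of the form β + e_i with β ∈ δ. -/
def StdBorder {n : ℕ} (δ : Set (Fin n →₀ ℕ)) : Set (Fin n →₀ ℕ) :=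
  {α | α ∉ δ ∧ ∃ (i : Fin n), ∃ β ∈ δ, β + Finsupp.single i 1 = α}

/-- `α` is the leading exponent of `g` with respect to the monomial order `mo`. -/
def IsLeadingExp {R : Type*} [CommRing R] {n : ℕ} (mo : MonOrd n)
    (g : MvPolynomial (Fin n) R) (α : Fin n →₀ ℕ) : Prop :=
  g.coeff α ≠ 0 ∧ ∀ β ∈ g.support, β ≠ α → mo.lt β α

/-- `f` (restricted to the corners of δ) is the reduced Gröbner basis of the monic ideal `I`
with standard set δ: the leading exponents of nonzero elements of `I` are exactly the
complement of δ, each `f α` (α a corner) is a monic element of `I` with leading exponent α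
whose non-leading exponents lie in δ (hence are ≺ α), and the `f α` generate `I`. -/
def IsReducedGB {R : Type*} [CommRing R] {n : ℕ} (mo : MonOrd n) (δ : Set (Fin n →₀ ℕ))
    (I : Ideal (MvPolynomial (Fin n) R)) (f : (Fin n →₀ ℕ) → MvPolynomial (Fin n) R) : Prop :=
  (∀ α, (∃ g ∈ I, g ≠ 0 ∧ IsLeadingExp mo g α) ↔ α ∉ δ) ∧
  (∀ α, StdCorner δ α → f α ∈ I ∧ (f α).coeff α = 1 ∧
    ∀ β ∈ (f α).support, β ≠ α → β ∈ δ ∧ mo.lt β α) ∧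
  I = Ideal.span {p | ∃ α, StdCorner δ α ∧ p = f α}


open MvPolynomial in
/-- Monomial orders are well-founded, via Dickson's lemma. -/
theorem MonOrd.wf {n : ℕ} (mo : MonOrd n) : WellFounded mo.lt := by
  haveI : IsTrans (Fin n →₀ ℕ) mo.lt := ⟨fun a b c => mo.lt_trans⟩
  haveI : IsIrrefl (Fin n →₀ ℕ) mo.lt := ⟨mo.lt_irrefl⟩
  haveI : IsStrictOrder (Fin n →₀ ℕ) mo.lt := { }
  by_contra h
  rw [RelEmbedding.wellFounded_iff_isEmpty, not_isEmpty_iff] at h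
  obtain ⟨f⟩ := h
  obtain ⟨m, k, hmk, hle⟩ := (wellQuasiOrdered_le (α := Fin n →₀ ℕ)) f
  have hlt : mo.lt (f k) (f m) := f.map_rel_iff.2 hmk
  obtain ⟨γ, hγ⟩ := le_iff_exists_add.mp hle
  rcases eq_or_ne γ 0 with rfl | hne
  · rw [add_zero] at hγ
    exact mo.lt_irrefl _ (hγ ▸ hlt)
  · have h1 : mo.lt (0 + f m) (γ + f m) := mo.add_right _ (mo.zero_min γ hne)
    rw [zero_add, add_comm γ] at h1
    exact mo.lt_irrefl _ (mo.lt_trans (hγ ▸ h1) hlt)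

/-- Every element outside a set decomposes as a corner plus something. -/
theorem exists_corner_decomp {n : ℕ} (δ : Set (Fin n →₀ ℕ)) :
    ∀ α ∉ δ, ∃ c γ, StdCorner δ c ∧ c + γ = α := by
  classical
  have key : ∀ (d : ℕ) (α : Fin n →₀ ℕ), (α.sum fun _ m => m) = d → α ∉ δ →
      ∃ c γ, StdCorner δ c ∧ c + γ = α := by
    intro d
    induction d using Nat.strong_induction_on with
    | _ d IH =>
      intro α hd hα
      by_cases hc : StdCorner δ α
      · exact ⟨α, 0, hc, add_zero α⟩
      · have : ∃ i : Fin n, ∃ β, β + Finsupp.single i 1 = α ∧ β ∉ δ := by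
          simp only [StdCorner, not_and, not_forall] at hc
          obtain ⟨i, β, hβ, hβδ⟩ := hc hα
          exact ⟨i, β, hβ, hβδ⟩
        obtain ⟨i, β, hβα, hβδ⟩ := this
        have hsum : (β.sum fun _ m => m) + 1 = d := by
          rw [← hd, ← hβα, Finsupp.sum_add_index' (fun _ => rfl) (fun _ _ _ => rfl)]
          simp [Finsupp.sum_single_index]
        obtain ⟨c, γ, hcc, hcγ⟩ := IH (β.sum fun _ m => m) (by omega) β rfl hβδ
        exact ⟨c, γ + Finsupp.single i 1, hcc, by rw [← add_assoc, hcγ, hβα]⟩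
  exact fun α hα => key _ α rfl hα

theorem stmt5 {R : Type*} [CommRing R] {n : ℕ} (mo : MonOrd n)
    (δ : Set (Fin n →₀ ℕ)) (hstd : StdSet δ) (hfin : δ.Finite)
    (f : (Fin n →₀ ℕ) → MvPolynomial (Fin n) R)
    (hf : ∀ α, StdCorner δ α → (f α).coeff α = 1 ∧
      ∀ β ∈ (f α).support, β ≠ α → β ∈ δ ∧ mo.lt β α)
    (I : Ideal (MvPolynomial (Fin n) R))
    (hI : I = Ideal.span {p | ∃ α, StdCorner δ α ∧ p = f α}) :
    ∀ α ∉ δ, ∃ g ∈ I, (g : MvPolynomial (Fin n) R).coeff α = 1 ∧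
      ∀ β ∈ (g : MvPolynomial (Fin n) R).support, β ≠ α → β ∈ δ := by
  classical
  have wf := mo.wf
  suffices H : ∀ α, α ∉ δ → ∃ g ∈ I, (g : MvPolynomial (Fin n) R).coeff α = 1 ∧
      ∀ β ∈ (g : MvPolynomial (Fin n) R).support, β ≠ α → β ∈ δ from H
  intro α
  induction α using wf.induction with
  | _ α IH =>
  intro hα
  obtain ⟨c, γ, hc, hcγ⟩ := exists_corner_decomp δ α hα
  obtain ⟨hfc1, hfc2⟩ := hf c hc
  have hfcI : f c ∈ I := by
    rw [hI]; exact Ideal.subset_span ⟨c, hc, rfl⟩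
  set g0 : MvPolynomial (Fin n) R := MvPolynomial.monomial γ (1 : R) * f c with hg0
  have hg0I : g0 ∈ I := I.mul_mem_left _ hfcI
  have hcoeffα : g0.coeff α = 1 := by
    rw [hg0, ← hcγ, add_comm c γ, MvPolynomial.coeff_monomial_mul, one_mul, hfc1]
  have hsupp0 : ∀ β' ∈ g0.support, β' ≠ α → mo.lt β' α := by
    intro β' hβ' hne
    rw [MvPolynomial.mem_support_iff, hg0, MvPolynomial.coeff_monomial_mul'] at hβ'
    split_ifs at hβ' with hle
    · rw [one_mul] at hβ'
      have hmem : β' - γ ∈ (f c).support := MvPolynomial.mem_support_iff.mpr hβ'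
      have hβ'eq : γ + (β' - γ) = β' := by
        rw [add_comm]; exact tsub_add_cancel_of_le hle
      have hnec : β' - γ ≠ c := by
        intro h
        apply hne
        rw [← hβ'eq, h, add_comm, hcγ]
      have := (hfc2 _ hmem hnec).2
      have h2 : mo.lt ((β' - γ) + γ) (c + γ) := mo.add_right γ this
      rw [hcγ] at h2
      rw [← hβ'eq, add_comm γ]
      exact h2
    · exact absurd rfl hβ'
  set S : Finset (Fin n →₀ ℕ) := g0.support.filter (fun β' => β' ∉ δ ∧ β' ≠ α) with hS
  have hmemS : ∀ β' ∈ S, β' ∈ g0.support ∧ β' ∉ δ ∧ β' ≠ α := by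
    intro β' hβ'
    simpa [hS] using Finset.mem_filter.mp hβ'
  have hchoice : ∀ β' ∈ S, ∃ g' ∈ I, (g' : MvPolynomial (Fin n) R).coeff β' = 1 ∧
      ∀ ζ ∈ (g' : MvPolynomial (Fin n) R).support, ζ ≠ β' → ζ ∈ δ := by
    intro β' hβ'
    obtain ⟨h1, h2, h3⟩ := hmemS β' hβ'
    exact IH β' (hsupp0 β' h1 h3) h2
  choose! h hhI hhcoeff hhsup using hchoice
  refine ⟨g0 - ∑ β' ∈ S, MvPolynomial.C (g0.coeff β') * h β', ?_, ?_, ?_⟩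
  · exact sub_mem hg0I (Submodule.sum_mem _ fun β' hβ' => I.mul_mem_left _ (hhI β' hβ'))
  · rw [MvPolynomial.coeff_sub, hcoeffα, MvPolynomial.coeff_sum]
    have : ∀ β' ∈ S, (MvPolynomial.C (g0.coeff β') * h β').coeff α = 0 := by
      intro β' hβ'
      obtain ⟨h1, h2, h3⟩ := hmemS β' hβ'
      have : (h β').coeff α = 0 := by
        by_contra hne
        exact hα (hhsup β' hβ' α (MvPolynomial.mem_support_iff.mpr hne) (Ne.symm h3))
      rw [MvPolynomial.coeff_C_mul, this, mul_zero]
    rw [Finset.sum_eq_zero this, sub_zero]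
  · intro ζ hζ hζα
    by_contra hζδ
    rw [MvPolynomial.mem_support_iff] at hζ
    apply hζ
    rw [MvPolynomial.coeff_sub, MvPolynomial.coeff_sum]
    have hterm : ∀ β' ∈ S, β' ≠ ζ → (MvPolynomial.C (g0.coeff β') * h β').coeff ζ = 0 := by
      intro β' hβ' hne
      have : (h β').coeff ζ = 0 := by
        by_contra hne2
        exact hζδ (hhsup β' hβ' ζ (MvPolynomial.mem_support_iff.mpr hne2) (Ne.symm hne))
      rw [MvPolynomial.coeff_C_mul, this, mul_zero]
    by_cases hζS : ζ ∈ S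
    · rw [Finset.sum_eq_single_of_mem ζ hζS hterm, MvPolynomial.coeff_C_mul,
        hhcoeff ζ hζS, mul_one, sub_self]
    · have hζ0 : g0.coeff ζ = 0 := by
        by_contra hne
        exact hζS (Finset.mem_filter.mpr ⟨MvPolynomial.mem_support_iff.mpr hne, hζδ, hζα⟩)
      rw [Finset.sum_eq_zero (fun β' hβ' => hterm β' hβ' (fun he => hζS (he ▸ hβ'))), hζ0,
        sub_zero]
end

section
/- Let R be a commutative ring, δ ⊆ ℕ^n a finite standard set, ≺ a monomial order, and I ⊆ R[x] an ideal generated by monic polynomials f_α (α ∈ 𝒞(δ)) with leading exponent α and non-leading exponents in δ. If the set of leading exponents of nonzero elements of I equals ℕ^n \ δ, then the family (f_α)_{α ∈ ℕ^n \ δ} from the extension of Lemma (i) (the unique elements of I with leading exponent α and all non-leading exponents in δ) is an R-module basis of I. -/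
theorem stmt7 {R : Type*} [CommRing R] {n : ℕ} (mo : MonOrd n)
    (δ : Set (Fin n →₀ ℕ)) (hstd : StdSet δ) (hfin : δ.Finite)
    (f : (Fin n →₀ ℕ) → MvPolynomial (Fin n) R)
    (hf : ∀ α, StdCorner δ α → (f α).coeff α = 1 ∧
      ∀ β ∈ (f α).support, β ≠ α → β ∈ δ ∧ mo.lt β α)
    (I : Ideal (MvPolynomial (Fin n) R))
    (hI : I = Ideal.span {p | ∃ α, StdCorner δ α ∧ p = f α})
    (hLE : ∀ α : Fin n →₀ ℕ, (∃ g ∈ I, g ≠ 0 ∧ IsLeadingExp mo g α) ↔ α ∉ δ)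
    (g : (Fin n →₀ ℕ) → MvPolynomial (Fin n) R)
    (hg : ∀ α ∉ δ, g α ∈ I ∧ (g α).coeff α = 1 ∧
      ∀ β ∈ (g α).support, β ≠ α → β ∈ δ ∧ mo.lt β α) :
    ∃ b : Module.Basis {α : Fin n →₀ ℕ // α ∉ δ} R (Submodule.restrictScalars R I),
      ∀ α : {α : Fin n →₀ ℕ // α ∉ δ}, (b α : MvPolynomial (Fin n) R) = g α.1 := by

  classical
  -- maximal element of a nonempty finset w.r.t. mo
  have hmax : ∀ (s : Finset (Fin n →₀ ℕ)), s.Nonempty →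
      ∃ α ∈ s, ∀ β ∈ s, β ≠ α → mo.lt β α := by
    intro s
    induction s using Finset.induction_on with
    | empty => intro h; exact absurd h (by simp)
    | insert a s ha ih =>
      intro _
      by_cases hs : s.Nonempty
      · obtain ⟨α, hα, hαmax⟩ := ih hs
        rcases mo.lt_total a α with h | h | h
        · refine ⟨α, Finset.mem_insert_of_mem hα, ?_⟩
          intro β hβ hβα
          rcases Finset.mem_insert.mp hβ with rfl | hβ'
          · exact h
          · exact hαmax β hβ' hβα
        · subst h
          exact absurd hα ha
        · refine ⟨a, Finset.mem_insert_self a s, ?_⟩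
          intro β hβ hβa
          rcases Finset.mem_insert.mp hβ with rfl | hβ'
          · exact absurd rfl hβa
          · by_cases hβα : β = α
            · subst hβα; exact h
            · exact mo.lt_trans (hαmax β hβ' hβα) h
      · refine ⟨a, Finset.mem_insert_self a s, ?_⟩
        intro β hβ hβa
        rcases Finset.mem_insert.mp hβ with rfl | hβ'
        · exact absurd rfl hβa
        · exact absurd ⟨β, hβ'⟩ hs
  -- key coefficient computation
  have key : ∀ (s : Finset (Fin n →₀ ℕ)), (∀ β ∈ s, β ∉ δ) → ∀ (c : (Fin n →₀ ℕ) → R),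
      ∀ α ∉ δ, MvPolynomial.coeff α (∑ β ∈ s, c β • g β) = if α ∈ s then c α else 0 := by
    intro s hs c α hα
    rw [MvPolynomial.coeff_sum]
    have hterm : ∀ β ∈ s, MvPolynomial.coeff α (c β • g β) = if β = α then c β else 0 := by
      intro β hβ
      rw [MvPolynomial.coeff_smul]
      by_cases h : β = α
      · subst h; rw [(hg β (hs β hβ)).2.1]; simp
      · have hzero : MvPolynomial.coeff α (g β) = 0 := by
          by_contra hc
          exact hα ((hg β (hs β hβ)).2.2 α (MvPolynomial.mem_support_iff.mpr hc)
            (fun e => h e.symm)).1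
        simp [hzero, h]
    rw [Finset.sum_congr rfl hterm, Finset.sum_ite_eq']
  -- every element of I is the combination of the g β over its support outside δ
  have hspan : ∀ p ∈ I, p = ∑ β ∈ p.support.filter (fun β => β ∉ δ),
      MvPolynomial.coeff β p • g β := by
    intro p hp
    set s := p.support.filter (fun β => β ∉ δ) with hsdef
    have hs : ∀ β ∈ s, β ∉ δ := fun β hβ => (Finset.mem_filter.mp hβ).2
    set q := ∑ β ∈ s, MvPolynomial.coeff β p • g β with hq
    have hqI : q ∈ I := by
      refine Submodule.sum_mem _ (fun β hβ => ?_)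
      rw [MvPolynomial.smul_eq_C_mul]
      exact Ideal.mul_mem_left _ _ (hg β (hs β hβ)).1
    have hcoeff : ∀ α ∉ δ, MvPolynomial.coeff α (p - q) = 0 := by
      intro α hα
      rw [MvPolynomial.coeff_sub, hq, key s hs _ α hα]
      by_cases hαs : α ∈ s
      · simp [hαs]
      · have : α ∉ p.support := by
          intro hmem
          exact hαs (Finset.mem_filter.mpr ⟨hmem, hα⟩)
        simp [hαs, MvPolynomial.notMem_support_iff.mp this]
    have hdiff : p - q = 0 := by
      by_contra hne
      have hne' : (p - q).support.Nonempty := by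
        rwa [MvPolynomial.support_nonempty]
      obtain ⟨α, hαmem, hαmax⟩ := hmax _ hne'
      have hαδ : α ∉ δ := (hLE α).mp ⟨p - q, Submodule.sub_mem _ hp hqI, hne,
        MvPolynomial.mem_support_iff.mp hαmem, fun β hβ hβα => hαmax β hβ hβα⟩
      exact MvPolynomial.mem_support_iff.mp hαmem (hcoeff α hαδ)
    have := sub_eq_zero.mp hdiff
    exact this
  -- the family in the submodule
  set v : {α : Fin n →₀ ℕ // α ∉ δ} → Submodule.restrictScalars R I :=
    fun α => ⟨g α.1, (hg α.1 α.2).1⟩ with hv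
  have hli : LinearIndependent R v := by
    rw [linearIndependent_iff']
    intro t c hc i hi
    have hcoe : ((∑ j ∈ t, c j • v j : Submodule.restrictScalars R I) :
        MvPolynomial (Fin n) R) = ∑ j ∈ t, c j • g j.1 := by
      simp [hv]
    have h0 : MvPolynomial.coeff i.1 (∑ j ∈ t, c j • g j.1) = 0 := by
      rw [← hcoe, hc]; simp
    rw [MvPolynomial.coeff_sum] at h0
    have hterm : ∀ j ∈ t, MvPolynomial.coeff i.1 (c j • g j.1) =
        if j = i then c j else 0 := by
      intro j _
      rw [MvPolynomial.coeff_smul]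
      by_cases h : j = i
      · subst h; rw [(hg j.1 j.2).2.1]; simp
      · have hne : i.1 ≠ j.1 := fun e => h (Subtype.ext e.symm)
        have hzero : MvPolynomial.coeff i.1 (g j.1) = 0 := by
          by_contra hcne
          exact i.2 ((hg j.1 j.2).2.2 i.1 (MvPolynomial.mem_support_iff.mpr hcne) hne).1
        simp [hzero, h]
    rw [Finset.sum_congr rfl hterm, Finset.sum_ite_eq'] at h0
    simpa [hi] using h0
  have hsp : ⊤ ≤ Submodule.span R (Set.range v) := by
    rintro ⟨p, hp⟩ -
    have hpI : p ∈ I := hp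
    set s := p.support.filter (fun β => β ∉ δ) with hsdef
    have heq : (⟨p, hp⟩ : Submodule.restrictScalars R I) = ∑ β ∈ s.attach,
        MvPolynomial.coeff β.1 p • v ⟨β.1, (Finset.mem_filter.mp β.2).2⟩ := by
      apply Subtype.ext
      have : ((∑ β ∈ s.attach,
          MvPolynomial.coeff β.1 p • v ⟨β.1, (Finset.mem_filter.mp β.2).2⟩ :
          Submodule.restrictScalars R I) : MvPolynomial (Fin n) R) =
          ∑ β ∈ s.attach, MvPolynomial.coeff β.1 p • g β.1 := by
        simp [hv]
      rw [this, Finset.sum_attach s (fun β => MvPolynomial.coeff β p • g β)]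
      exact hspan p hpI
    rw [heq]
    exact Submodule.sum_mem _ (fun β _ => Submodule.smul_mem _ _
      (Submodule.subset_span ⟨_, rfl⟩))
  refine ⟨Module.Basis.mk hli hsp, fun α => ?_⟩
  rw [Module.Basis.mk_apply]
end

section
/- Let B be a commutative ring, δ a finite standard set, ≺ a monomial order, I ⊆ B[x] monic with standard set δ and reduced Gröbner basis f_α = x^α − Σ_{β∈δ, β≺α} a_{α,β} x^β (α ∈ 𝒞(δ)). Fix a linear map ℓ : ℤ^n → ℤ with ℓ(α) > ℓ(β) whenever a_{α,β} ≠ 0 for α ∈ ℬ(δ), β ∈ δ. Let t be an indeterminate and define g̃_α = x^α − Σ_{β∈δ, β≺α} t^{ℓ(α)−ℓ(β)} a_{α,β} x^β ∈ (B[t])[x]. Then for all α ∈ ℬ(δ), the unique element h_α of the ideal (g̃_α : α ∈ 𝒞(δ)) with leading exponent α and non-leading exponents in δ has coefficients b_{α,β} = t^{ℓ(α)−ℓ(β)} a_{α,β}. -/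
section AuxStmt16

open MvPolynomial

lemma aux_exists_max {n : ℕ} (mo : MonOrd n) (s : Finset (Fin n →₀ ℕ)) (hs : s.Nonempty) :
    ∃ m ∈ s, ∀ b ∈ s, b ≠ m → mo.lt b m := by
  induction s using Finset.induction_on with
  | empty => exact absurd hs (by simp)
  | @insert a s ha ih =>
    rcases s.eq_empty_or_nonempty with rfl | hsne
    · exact ⟨a, by simp, by simp⟩
    · obtain ⟨m, hm, hmax⟩ := ih hsne
      rcases mo.lt_total a m with h | h | h
      · refine ⟨m, by simp [hm], ?_⟩
        intro b hb hbm
        rcases Finset.mem_insert.1 hb with rfl | hb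
        · exact h
        · exact hmax b hb hbm
      · subst h
        refine ⟨a, by simp, ?_⟩
        intro b hb hbm
        rcases Finset.mem_insert.1 hb with rfl | hb
        · exact absurd rfl hbm
        · exact hmax b hb hbm
      · refine ⟨a, by simp, ?_⟩
        intro b hb hba
        rcases Finset.mem_insert.1 hb with rfl | hb
        · exact absurd rfl hba
        · by_cases hbm : b = m
          · exact hbm ▸ h
          · exact mo.lt_trans (hmax b hb hbm) h

noncomputable def tcoeff {B : Type*} [CommRing B] (z : ℤ) (p : Polynomial B) : B :=
  if 0 ≤ z then p.coeff z.toNat else 0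

variable {B : Type*} [CommRing B] {n : ℕ}

lemma tcoeff_zero (z : ℤ) : tcoeff z (0 : Polynomial B) = 0 := by
  unfold tcoeff; split <;> simp

lemma tcoeff_add (z : ℤ) (p q : Polynomial B) :
    tcoeff z (p + q) = tcoeff z p + tcoeff z q := by
  unfold tcoeff; split <;> simp

lemma tcoeff_monomial (z : ℤ) (k : ℕ) (b : B) :
    tcoeff z (Polynomial.monomial k b) = if z = (k : ℤ) then b else 0 := by
  unfold tcoeff
  split_ifs with h1 h2 h3
  · rw [Polynomial.coeff_monomial, if_pos (by omega)]
  · rw [Polynomial.coeff_monomial, if_neg (by omega)]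
  · omega
  · rfl

noncomputable def piW (L : (Fin n →₀ ℕ) → ℤ) (w : ℤ)
    (g : MvPolynomial (Fin n) (Polynomial B)) : MvPolynomial (Fin n) B :=
  ∑ β ∈ g.support, monomial β (tcoeff (w - L β) (g.coeff β))

lemma piW_coeff (L : (Fin n →₀ ℕ) → ℤ) (w : ℤ) (g : MvPolynomial (Fin n) (Polynomial B))
    (ρ : Fin n →₀ ℕ) : (piW L w g).coeff ρ = tcoeff (w - L ρ) (g.coeff ρ) := by
  classical
  unfold piW
  rw [coeff_sum]
  simp only [coeff_monomial]
  rw [Finset.sum_ite_eq' g.support ρ]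
  by_cases h : ρ ∈ g.support
  · simp [h]
  · simp only [h, if_false]
    rw [MvPolynomial.notMem_support_iff.1 h, tcoeff_zero]

lemma piW_add (L : (Fin n →₀ ℕ) → ℤ) (w : ℤ) (g h : MvPolynomial (Fin n) (Polynomial B)) :
    piW L w (g + h) = piW L w g + piW L w h := by
  apply MvPolynomial.ext; intro ρ
  simp [piW_coeff, MvPolynomial.coeff_add, tcoeff_add]

lemma piW_zero (L : (Fin n →₀ ℕ) → ℤ) (w : ℤ) : piW L w (0 : MvPolynomial (Fin n) (Polynomial B)) = 0 := by
  apply MvPolynomial.ext; intro ρ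
  simp [piW_coeff, tcoeff_zero]

lemma tcoeff_neg (z : ℤ) (p : Polynomial B) : tcoeff z (-p) = - tcoeff z p := by
  unfold tcoeff; split <;> simp

lemma piW_neg (L : (Fin n →₀ ℕ) → ℤ) (w : ℤ) (g : MvPolynomial (Fin n) (Polynomial B)) :
    piW L w (-g) = - piW L w g := by
  apply MvPolynomial.ext; intro ρ
  simp [piW_coeff, tcoeff_neg]

lemma piW_sub (L : (Fin n →₀ ℕ) → ℤ) (w : ℤ) (g h : MvPolynomial (Fin n) (Polynomial B)) :
    piW L w (g - h) = piW L w g - piW L w h := by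
  rw [sub_eq_add_neg, piW_add, piW_neg, sub_eq_add_neg]

lemma piW_sum (L : (Fin n →₀ ℕ) → ℤ) (w : ℤ) {ι : Type*} (s : Finset ι)
    (f : ι → MvPolynomial (Fin n) (Polynomial B)) :
    piW L w (∑ i ∈ s, f i) = ∑ i ∈ s, piW L w (f i) := by
  classical
  induction s using Finset.induction_on with
  | empty => simp [piW_zero]
  | @insert a s ha ih => rw [Finset.sum_insert ha, Finset.sum_insert ha, piW_add, ih]

lemma piW_monomial (L : (Fin n →₀ ℕ) → ℤ) (w : ℤ) (ρ : Fin n →₀ ℕ) (p : Polynomial B) :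
    piW L w (monomial ρ p) = monomial ρ (tcoeff (w - L ρ) p) := by
  apply MvPolynomial.ext; intro γ
  rw [piW_coeff]
  simp only [coeff_monomial]
  split_ifs with h
  · subst h; rfl
  · rw [tcoeff_zero]

lemma piW_support (L : (Fin n →₀ ℕ) → ℤ) (w : ℤ) (g : MvPolynomial (Fin n) (Polynomial B))
    (ρ : Fin n →₀ ℕ) (h : ρ ∈ (piW L w g).support) : ρ ∈ g.support := by
  rw [MvPolynomial.mem_support_iff] at h ⊢
  intro h0
  rw [piW_coeff, h0, tcoeff_zero] at h
  exact h rfl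

lemma key_identity {R : Type*} [CommRing R] {n : ℕ} (δ : Finset (Fin n →₀ ℕ))
    (c : (Fin n →₀ ℕ) → (Fin n →₀ ℕ) → R) (μ : Fin n →₀ ℕ) (j : Fin n) :
    (monomial (Finsupp.single j 1) (1 : R)) *
        (monomial μ 1 - ∑ β ∈ δ, monomial β (c μ β)) +
      ∑ β ∈ δ.filter (fun β => β + Finsupp.single j 1 ∉ δ),
        C (c μ β) * (monomial (β + Finsupp.single j 1) 1 -
          ∑ γ ∈ δ, monomial γ (c (β + Finsupp.single j 1) γ))
    = monomial (μ + Finsupp.single j 1) 1 -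
      ∑ γ ∈ δ, monomial γ
        ((∑ β ∈ (δ.filter (fun β => β + Finsupp.single j 1 ∈ δ)).filter
              (fun β => β + Finsupp.single j 1 = γ), c μ β) +
         ∑ β ∈ δ.filter (fun β => β + Finsupp.single j 1 ∉ δ),
           c μ β * c (β + Finsupp.single j 1) γ) := by
  classical
  set e := Finsupp.single j 1 with he
  set D := δ.filter (fun β => β + e ∈ δ) with hD
  set Dc := δ.filter (fun β => β + e ∉ δ) with hDc
  have h1 : monomial e (1:R) * (monomial μ 1 - ∑ β ∈ δ, monomial β (c μ β))
      = monomial (μ + e) 1 -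
        (∑ β ∈ D, monomial (β + e) (c μ β) + ∑ β ∈ Dc, monomial (β + e) (c μ β)) := by
    rw [mul_sub, Finset.mul_sum]
    simp only [monomial_mul, one_mul]
    rw [add_comm e μ]
    congr 1
    rw [← Finset.sum_filter_add_sum_filter_not δ (fun β => β + e ∈ δ)]
    congr 1 <;> exact Finset.sum_congr rfl (fun β _ => by rw [add_comm e β])
  have h2 : ∑ β ∈ Dc, C (c μ β) * (monomial (β + e) 1 - ∑ γ ∈ δ, monomial γ (c (β + e) γ))
      = ∑ β ∈ Dc, monomial (β + e) (c μ β)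
        - ∑ γ ∈ δ, monomial γ (∑ β ∈ Dc, c μ β * c (β + e) γ) := by
    have : ∀ β ∈ Dc, C (c μ β) * (monomial (β + e) 1 - ∑ γ ∈ δ, monomial γ (c (β + e) γ))
        = monomial (β + e) (c μ β) - ∑ γ ∈ δ, monomial γ (c μ β * c (β + e) γ) := by
      intro β _
      rw [mul_sub, Finset.mul_sum, C_mul_monomial, mul_one]
      congr 1
      exact Finset.sum_congr rfl (fun γ _ => by rw [C_mul_monomial])
    rw [Finset.sum_congr rfl this, Finset.sum_sub_distrib]
    congr 1
    rw [Finset.sum_comm]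
    exact Finset.sum_congr rfl (fun γ _ => (map_sum (monomial γ) _ _).symm)
  have h3 : ∑ β ∈ D, monomial (β + e) (c μ β)
      = ∑ γ ∈ δ, monomial γ (∑ β ∈ D.filter (fun β => β + e = γ), c μ β) := by
    rw [← Finset.sum_fiberwise_of_maps_to (g := fun β => β + e)
      (fun β hβ => (Finset.mem_filter.1 hβ).2) (fun β => monomial (β + e) (c μ β))]
    apply Finset.sum_congr rfl
    intro γ _
    rw [map_sum (monomial γ)]
    exact Finset.sum_congr rfl (fun β hβ => by rw [(Finset.mem_filter.1 hβ).2])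
  rw [h1, h2, h3]
  have h4 : ∑ γ ∈ δ, monomial γ
      ((∑ β ∈ D.filter (fun β => β + e = γ), c μ β) + ∑ β ∈ Dc, c μ β * c (β + e) γ)
      = ∑ γ ∈ δ, (monomial γ (∑ β ∈ D.filter (fun β => β + e = γ), c μ β)
          + monomial γ (∑ β ∈ Dc, c μ β * c (β + e) γ)) :=
    Finset.sum_congr rfl (fun γ _ => by rw [map_add])
  rw [h4, Finset.sum_add_distrib]
  abel

lemma coeff_sum_monomial {R : Type*} [CommRing R] {n : ℕ} (δ : Finset (Fin n →₀ ℕ))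
    (d : (Fin n →₀ ℕ) → R) (γ : Fin n →₀ ℕ) (hγ : γ ∈ δ) :
    (∑ β ∈ δ, monomial β (d β)).coeff γ = d γ := by
  rw [coeff_sum]
  simp only [coeff_monomial]
  rw [Finset.sum_ite_eq' δ γ, if_pos hγ]

lemma support_sum_monomial_mem {R : Type*} [CommRing R] {n : ℕ} (δ : Finset (Fin n →₀ ℕ))
    (d : (Fin n →₀ ℕ) → R) (ρ : Fin n →₀ ℕ)
    (hρ : ρ ∈ (∑ β ∈ δ, monomial β (d β)).support) : ρ ∈ δ := by
  by_contra h
  rw [MvPolynomial.mem_support_iff] at hρ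
  apply hρ
  rw [coeff_sum]
  refine Finset.sum_eq_zero fun β hβ => ?_
  rw [coeff_monomial]
  split_ifs with he
  · exact absurd (he ▸ hβ) h
  · rfl

lemma I_delta_zero {B : Type*} [CommRing B] {n : ℕ} (mo : MonOrd n) (δ : Finset (Fin n →₀ ℕ))
    (I : Ideal (MvPolynomial (Fin n) B))
    (hlead : ∀ α, (∃ g ∈ I, g ≠ 0 ∧ IsLeadingExp mo g α) ↔ α ∉ (↑δ : Set (Fin n →₀ ℕ)))
    (g : MvPolynomial (Fin n) B) (hg : g ∈ I) (hsupp : ∀ β ∈ g.support, β ∈ δ) : g = 0 := by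
  by_contra hne
  obtain ⟨m, hm, hmax⟩ := aux_exists_max mo g.support (MvPolynomial.support_nonempty.2 hne)
  have : m ∉ (↑δ : Set (Fin n →₀ ℕ)) :=
    (hlead m).1 ⟨g, hg, hne, MvPolynomial.mem_support_iff.1 hm, hmax⟩
  exact this (hsupp m hm)

lemma L_add {n : ℕ} (l : (Fin n → ℤ) →ₗ[ℤ] ℤ) (L : (Fin n →₀ ℕ) → ℤ)
    (hL : ∀ v : Fin n →₀ ℕ, L v = l (fun k => (v k : ℤ))) (u v : Fin n →₀ ℕ) :
    L (u + v) = L u + L v := by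
  have h : (fun k => (((u + v) k : ℤ))) = (fun k => ((u k : ℤ))) + fun k => ((v k : ℤ)) := by
    funext k; simp
  rw [hL, hL, hL, h, map_add]

lemma corner_mem_border {n : ℕ} (δ : Finset (Fin n →₀ ℕ))
    (hstd : ∀ α ∉ δ, ∀ γ : Fin n →₀ ℕ, α + γ ∉ δ) (hne : δ.Nonempty)
    (c : Fin n →₀ ℕ) (hc : StdCorner (↑δ : Set (Fin n →₀ ℕ)) c) :
    c ∈ StdBorder (↑δ : Set (Fin n →₀ ℕ)) := by
  obtain ⟨β₀, hβ₀⟩ := hne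
  have h0 : (0 : Fin n →₀ ℕ) ∈ δ := by
    by_contra h0
    exact hstd 0 h0 β₀ (by rwa [zero_add])
  have hc0 : c ≠ 0 := fun h => hc.1 (by rw [h]; exact h0)
  obtain ⟨i, hi⟩ : ∃ i, c i ≠ 0 := by
    by_contra h
    push_neg at h
    exact hc0 (Finsupp.ext fun i => h i)
  have hadd : (c - Finsupp.single i 1) + Finsupp.single i 1 = c := by
    ext k
    simp only [Finsupp.add_apply, Finsupp.tsub_apply, Finsupp.single_apply]
    split_ifs with h
    · subst h; omega
    · omega
  exact ⟨hc.1, i, c - Finsupp.single i 1, hc.2 i _ hadd, hadd⟩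

lemma border_step {n : ℕ} (mo : MonOrd n) (δ : Finset (Fin n →₀ ℕ))
    (hstd : ∀ α ∉ δ, ∀ γ : Fin n →₀ ℕ, α + γ ∉ δ) (α : Fin n →₀ ℕ)
    (hα : α ∈ StdBorder (↑δ : Set (Fin n →₀ ℕ))) (hnc : ¬ StdCorner (↑δ : Set (Fin n →₀ ℕ)) α) :
    ∃ (j : Fin n) (μ : Fin n →₀ ℕ), μ + Finsupp.single j 1 = α ∧
      μ ∈ StdBorder (↑δ : Set (Fin n →₀ ℕ)) ∧ mo.lt μ α := by
  obtain ⟨hαδ, i', β₀, hβ₀, hβ₀e⟩ := hα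
  have h2 : ¬ ∀ (i : Fin n) (β : Fin n →₀ ℕ), β + Finsupp.single i 1 = α → β ∈ (↑δ : Set _) :=
    fun h => hnc ⟨hαδ, h⟩
  push_neg at h2
  obtain ⟨j, μ, hμe, hμδ⟩ := h2
  have hji : j ≠ i' := by
    rintro rfl
    have h : μ = β₀ := add_right_cancel (hμe.trans hβ₀e.symm)
    exact hμδ (h ▸ hβ₀)
  have hco : ∀ k, μ k + (Finsupp.single j 1) k = β₀ k + (Finsupp.single i' 1) k := by
    intro k
    rw [← Finsupp.add_apply, ← Finsupp.add_apply, hμe, hβ₀e]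
  have hβ₀j : 1 ≤ β₀ j := by
    have h := hco j
    have h1 : (Finsupp.single j (1:ℕ)) j = 1 := Finsupp.single_eq_same
    have h2 : (Finsupp.single i' (1:ℕ)) j = 0 := Finsupp.single_eq_of_ne hji
    omega
  have h1 : (β₀ - Finsupp.single j 1) + Finsupp.single j 1 = β₀ := by
    ext k
    simp only [Finsupp.add_apply, Finsupp.tsub_apply, Finsupp.single_apply]
    split_ifs with h
    · subst h; omega
    · omega
  have hβ'' : (β₀ - Finsupp.single j 1) ∈ δ := by
    by_contra h
    exact hstd _ h (Finsupp.single j 1) (by rw [h1]; exact hβ₀)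
  have h2 : (β₀ - Finsupp.single j 1) + Finsupp.single i' 1 = μ := by
    ext k
    have h := hco k
    simp only [Finsupp.add_apply, Finsupp.tsub_apply, Finsupp.single_apply] at h ⊢
    by_cases hjk : j = k
    · subst hjk
      rw [if_neg hji.symm, if_pos rfl] at h
      rw [if_neg (fun hh : i' = j => hji hh.symm), if_pos rfl]
      omega
    · rw [if_neg hjk] at h ⊢
      by_cases hik : i' = k
      · rw [if_pos hik] at h ⊢; omega
      · rw [if_neg hik] at h ⊢; omega
  have hμb : μ ∈ StdBorder (↑δ : Set (Fin n →₀ ℕ)) :=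
    ⟨hμδ, i', β₀ - Finsupp.single j 1, hβ'', h2⟩
  have hlt : mo.lt μ α := by
    have h3 : Finsupp.single j (1:ℕ) ≠ 0 := by
      intro h
      have := Finsupp.single_eq_same (a := j) (b := (1:ℕ))
      rw [h] at this
      simp at this
    have h4 := mo.add_right μ (mo.zero_min _ h3)
    rwa [zero_add, add_comm, hμe] at h4
  exact ⟨j, μ, hμe, hμb, hlt⟩

lemma piW_mul_gen {B : Type*} [CommRing B] {n : ℕ} (δ : Finset (Fin n →₀ ℕ))
    (a : (Fin n →₀ ℕ) → (Fin n →₀ ℕ) → B) (L : (Fin n →₀ ℕ) → ℤ)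
    (hlc : ∀ c, StdCorner (↑δ : Set (Fin n →₀ ℕ)) c → ∀ β ∈ δ, a c β ≠ 0 → L β < L c)
    (hLadd : ∀ u v, L (u + v) = L u + L v)
    (c0 : Fin n →₀ ℕ) (hc0 : StdCorner (↑δ : Set (Fin n →₀ ℕ)) c0)
    (γ : Fin n →₀ ℕ) (k : ℕ) (b : B) (w : ℤ) :
    piW L w (monomial γ (Polynomial.monomial k b) *
      (monomial c0 1 - ∑ β ∈ δ, monomial β (Polynomial.monomial (L c0 - L β).toNat (a c0 β))))
    = monomial γ (if w = k + L γ + L c0 then b else 0) *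
      (monomial c0 1 - ∑ β ∈ δ, monomial β (a c0 β)) := by
  rw [mul_sub, Finset.mul_sum, mul_sub, Finset.mul_sum]
  simp only [monomial_mul, mul_one]
  rw [piW_sub, piW_sum, piW_monomial]
  congr 1
  · rw [tcoeff_monomial, hLadd]
    have hc : (w - (L γ + L c0) = (k:ℤ)) ↔ (w = (k:ℤ) + L γ + L c0) := by omega
    exact congrArg _ (if_congr hc rfl rfl)
  · apply Finset.sum_congr rfl
    intro β hβ
    rw [piW_monomial, Polynomial.monomial_mul_monomial, tcoeff_monomial, hLadd]
    by_cases hz : a c0 β = 0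
    · simp [hz]
    · have hlt : L β < L c0 := hlc c0 hc0 β hβ hz
      rw [ite_mul, zero_mul]
      have hc : (w - (L γ + L β) = ((k + (L c0 - L β).toNat : ℕ) : ℤ)) ↔
          (w = (k:ℤ) + L γ + L c0) := by push_cast; omega
      exact congrArg _ (if_congr hc rfl rfl)

lemma piW_J_mem {B : Type*} [CommRing B] {n : ℕ} (δ : Finset (Fin n →₀ ℕ))
    (a : (Fin n →₀ ℕ) → (Fin n →₀ ℕ) → B) (L : (Fin n →₀ ℕ) → ℤ)
    (hlc : ∀ c, StdCorner (↑δ : Set (Fin n →₀ ℕ)) c → ∀ β ∈ δ, a c β ≠ 0 → L β < L c)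
    (hLadd : ∀ u v, L (u + v) = L u + L v)
    (I : Ideal (MvPolynomial (Fin n) B))
    (hfI : ∀ c, StdCorner (↑δ : Set (Fin n →₀ ℕ)) c →
      (monomial c 1 - ∑ β ∈ δ, monomial β (a c β)) ∈ I)
    (J : Ideal (MvPolynomial (Fin n) (Polynomial B)))
    (hJ : J = Ideal.span {p | ∃ α, StdCorner (↑δ : Set (Fin n →₀ ℕ)) α ∧
      p = monomial α (1 : Polynomial B) -
        ∑ β ∈ δ, monomial β (Polynomial.monomial (L α - L β).toNat (a α β))}) :
    ∀ g ∈ J, ∀ w, piW L w g ∈ I := by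
  have main : ∀ g ∈ J, ∀ q w, piW L w (q * g) ∈ I := by
    intro g hg
    rw [hJ] at hg
    induction hg using Submodule.span_induction with
    | mem x hx =>
      obtain ⟨c0, hc0, rfl⟩ := hx
      intro q w
      have hq0 : q = ∑ γ ∈ q.support, ∑ k ∈ (q.coeff γ).support,
          monomial γ (Polynomial.monomial k ((q.coeff γ).coeff k)) := by
        conv_lhs => rw [← support_sum_monomial_coeff q]
        refine Finset.sum_congr rfl fun γ _ => ?_
        rw [← map_sum (monomial γ)]
        congr 1
        conv_lhs => rw [← Polynomial.sum_monomial_eq (q.coeff γ)]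
        rw [Polynomial.sum_def]
      have hq : q * (monomial c0 (1 : Polynomial B) -
          ∑ β ∈ δ, monomial β (Polynomial.monomial (L c0 - L β).toNat (a c0 β)))
          = ∑ γ ∈ q.support, ∑ k ∈ (q.coeff γ).support,
            (monomial γ (Polynomial.monomial k ((q.coeff γ).coeff k)) *
              (monomial c0 1 -
                ∑ β ∈ δ, monomial β (Polynomial.monomial (L c0 - L β).toNat (a c0 β)))) := by
        conv_lhs => rw [hq0]
        rw [Finset.sum_mul]
        exact Finset.sum_congr rfl fun γ _ => Finset.sum_mul _ _ _
      rw [hq, piW_sum]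
      refine Submodule.sum_mem I fun γ _ => ?_
      rw [piW_sum]
      refine Submodule.sum_mem I fun k _ => ?_
      rw [piW_mul_gen δ a L hlc hLadd c0 hc0]
      exact Ideal.mul_mem_left I _ (hfI c0 hc0)
    | zero => intro q w; rw [mul_zero, piW_zero]; exact Submodule.zero_mem I
    | add x y hx hy ihx ihy =>
      intro q w
      rw [mul_add, piW_add]
      exact Submodule.add_mem I (ihx q w) (ihy q w)
    | smul r x hx ihx =>
      intro q w
      rw [smul_eq_mul, ← mul_assoc]
      exact ihx (q * r) w
  intro g hg w
  have := main g hg 1 w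
  rwa [one_mul] at this

lemma a_relation {B : Type*} [CommRing B] {n : ℕ} (δ : Finset (Fin n →₀ ℕ))
    (a : (Fin n →₀ ℕ) → (Fin n →₀ ℕ) → B) (I : Ideal (MvPolynomial (Fin n) B))
    (hIz : ∀ g ∈ I, (∀ β ∈ g.support, β ∈ δ) → g = 0)
    (hborder : ∀ α ∈ StdBorder (↑δ : Set (Fin n →₀ ℕ)),
      (monomial α (1 : B) - ∑ β ∈ δ, monomial β (a α β)) ∈ I)
    (μ : Fin n →₀ ℕ) (j : Fin n) (hμ : μ ∈ StdBorder (↑δ : Set (Fin n →₀ ℕ)))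
    (hα : μ + Finsupp.single j 1 ∈ StdBorder (↑δ : Set (Fin n →₀ ℕ))) :
    ∀ γ ∈ δ, a (μ + Finsupp.single j 1) γ =
      (∑ β ∈ (δ.filter (fun β => β + Finsupp.single j 1 ∈ δ)).filter
          (fun β => β + Finsupp.single j 1 = γ), a μ β) +
      ∑ β ∈ δ.filter (fun β => β + Finsupp.single j 1 ∉ δ),
        a μ β * a (β + Finsupp.single j 1) γ := by
  classical
  set e := Finsupp.single j 1 with he
  set a' : (Fin n →₀ ℕ) → B := fun γ =>
    (∑ β ∈ (δ.filter (fun β => β + e ∈ δ)).filter (fun β => β + e = γ), a μ β) +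
    ∑ β ∈ δ.filter (fun β => β + e ∉ δ), a μ β * a (β + e) γ with ha'
  have hGI : (monomial e (1:B)) * (monomial μ 1 - ∑ β ∈ δ, monomial β (a μ β)) +
      ∑ β ∈ δ.filter (fun β => β + e ∉ δ),
        C (a μ β) * (monomial (β + e) 1 - ∑ γ ∈ δ, monomial γ (a (β + e) γ)) ∈ I := by
    refine Submodule.add_mem I (Ideal.mul_mem_left I _ (hborder μ hμ)) ?_
    refine Submodule.sum_mem I fun β hβ => ?_
    obtain ⟨hβδ, hβe⟩ := Finset.mem_filter.1 hβ
    exact Ideal.mul_mem_left I _ (hborder (β + e)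
      ⟨by simpa using hβe, j, β, by simpa using hβδ, rfl⟩)
  rw [key_identity δ a μ j] at hGI
  have hdiff : (monomial (μ + e) (1:B) - ∑ γ ∈ δ, monomial γ (a' γ)) -
      (monomial (μ + e) 1 - ∑ γ ∈ δ, monomial γ (a (μ + e) γ)) ∈ I :=
    Submodule.sub_mem I hGI (hborder (μ + e) hα)
  have heq : (monomial (μ + e) (1:B) - ∑ γ ∈ δ, monomial γ (a' γ)) -
      (monomial (μ + e) 1 - ∑ γ ∈ δ, monomial γ (a (μ + e) γ))
      = ∑ γ ∈ δ, monomial γ (a (μ + e) γ - a' γ) := by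
    rw [sub_sub_sub_cancel_left, ← Finset.sum_sub_distrib]
    exact Finset.sum_congr rfl fun γ _ => (map_sub (monomial γ) _ _).symm
  rw [heq] at hdiff
  have hzero := hIz _ hdiff (fun ρ hρ => support_sum_monomial_mem δ _ ρ hρ)
  intro γ hγ
  have := congrArg (fun p => MvPolynomial.coeff γ p) hzero
  simp only [coeff_sum_monomial δ _ γ hγ, MvPolynomial.coeff_zero] at this
  exact sub_eq_zero.1 this

lemma ta_relation {B : Type*} [CommRing B] {n : ℕ} (δ : Finset (Fin n →₀ ℕ))
    (a : (Fin n →₀ ℕ) → (Fin n →₀ ℕ) → B) (L : (Fin n →₀ ℕ) → ℤ)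
    (hLadd : ∀ u v, L (u + v) = L u + L v)
    (hl : ∀ α ∈ StdBorder (↑δ : Set (Fin n →₀ ℕ)), ∀ β ∈ δ, a α β ≠ 0 → L β < L α)
    (μ : Fin n →₀ ℕ) (j : Fin n) (hμ : μ ∈ StdBorder (↑δ : Set (Fin n →₀ ℕ)))
    (hα : μ + Finsupp.single j 1 ∈ StdBorder (↑δ : Set (Fin n →₀ ℕ)))
    (harel : ∀ γ ∈ δ, a (μ + Finsupp.single j 1) γ =
      (∑ β ∈ (δ.filter (fun β => β + Finsupp.single j 1 ∈ δ)).filter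
          (fun β => β + Finsupp.single j 1 = γ), a μ β) +
      ∑ β ∈ δ.filter (fun β => β + Finsupp.single j 1 ∉ δ),
        a μ β * a (β + Finsupp.single j 1) γ) :
    ∀ γ ∈ δ, Polynomial.monomial (L (μ + Finsupp.single j 1) - L γ).toNat
        (a (μ + Finsupp.single j 1) γ) =
      (∑ β ∈ (δ.filter (fun β => β + Finsupp.single j 1 ∈ δ)).filter
          (fun β => β + Finsupp.single j 1 = γ),
        Polynomial.monomial (L μ - L β).toNat (a μ β)) +
      ∑ β ∈ δ.filter (fun β => β + Finsupp.single j 1 ∉ δ),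
        Polynomial.monomial (L μ - L β).toNat (a μ β) *
          Polynomial.monomial (L (β + Finsupp.single j 1) - L γ).toNat
            (a (β + Finsupp.single j 1) γ) := by
  classical
  intro γ hγ
  rw [harel γ hγ, map_add, map_sum, map_sum]
  congr 1
  · refine Finset.sum_congr rfl fun β hβ => ?_
    have hβγ : β + Finsupp.single j 1 = γ := (Finset.mem_filter.1 hβ).2
    have hLe : L (μ + Finsupp.single j 1) - L γ = L μ - L β := by
      rw [← hβγ, hLadd, hLadd]; ring
    rw [hLe]
  · refine Finset.sum_congr rfl fun β hβ => ?_
    obtain ⟨hβδ, hβe⟩ := Finset.mem_filter.1 hβ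
    rw [Polynomial.monomial_mul_monomial]
    by_cases h1 : a μ β = 0
    · simp [h1]
    by_cases h2 : a (β + Finsupp.single j 1) γ = 0
    · simp [h2]
    have hβeb : β + Finsupp.single j 1 ∈ StdBorder (↑δ : Set (Fin n →₀ ℕ)) :=
      ⟨by simpa using hβe, j, β, by simpa using hβδ, rfl⟩
    have hlt1 : L β < L μ := hl μ hμ β hβδ h1
    have hlt2 : L γ < L (β + Finsupp.single j 1) := hl _ hβeb γ hγ h2
    have hadd1 : L (μ + Finsupp.single j 1) = L μ + L (Finsupp.single j 1) := hLadd _ _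
    have hadd2 : L (β + Finsupp.single j 1) = L β + L (Finsupp.single j 1) := hLadd _ _
    have hexp : (L (μ + Finsupp.single j 1) - L γ).toNat
        = (L μ - L β).toNat + (L (β + Finsupp.single j 1) - L γ).toNat := by omega
    rw [hexp]

lemma J_delta_zero {B : Type*} [CommRing B] {n : ℕ} (mo : MonOrd n) (δ : Finset (Fin n →₀ ℕ))
    (a : (Fin n →₀ ℕ) → (Fin n →₀ ℕ) → B) (L : (Fin n →₀ ℕ) → ℤ)
    (hlc : ∀ c, StdCorner (↑δ : Set (Fin n →₀ ℕ)) c → ∀ β ∈ δ, a c β ≠ 0 → L β < L c)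
    (hLadd : ∀ u v, L (u + v) = L u + L v)
    (I : Ideal (MvPolynomial (Fin n) B))
    (hlead : ∀ α, (∃ g ∈ I, g ≠ 0 ∧ IsLeadingExp mo g α) ↔ α ∉ (↑δ : Set (Fin n →₀ ℕ)))
    (hfI : ∀ c, StdCorner (↑δ : Set (Fin n →₀ ℕ)) c →
      (monomial c 1 - ∑ β ∈ δ, monomial β (a c β)) ∈ I)
    (J : Ideal (MvPolynomial (Fin n) (Polynomial B)))
    (hJ : J = Ideal.span {p | ∃ α, StdCorner (↑δ : Set (Fin n →₀ ℕ)) α ∧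
      p = monomial α (1 : Polynomial B) -
        ∑ β ∈ δ, monomial β (Polynomial.monomial (L α - L β).toNat (a α β))}) :
    ∀ g ∈ J, (∀ β ∈ g.support, β ∈ δ) → g = 0 := by
  intro g hg hsupp
  apply MvPolynomial.ext; intro ρ
  rw [MvPolynomial.coeff_zero]
  apply Polynomial.ext; intro m
  rw [Polynomial.coeff_zero]
  have h1 : piW L ((m : ℤ) + L ρ) g ∈ I := piW_J_mem δ a L hlc hLadd I hfI J hJ g hg _
  have h2 : piW L ((m : ℤ) + L ρ) g = 0 := I_delta_zero mo δ I hlead _ h1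
    (fun β hβ => hsupp β (piW_support L _ g β hβ))
  have h3 := congrArg (fun p => MvPolynomial.coeff ρ p) h2
  simp only [piW_coeff, MvPolynomial.coeff_zero] at h3
  have h4 : (m : ℤ) + L ρ - L ρ = (m : ℤ) := by ring
  rw [h4] at h3
  unfold tcoeff at h3
  rw [if_pos (by omega : (0:ℤ) ≤ (m:ℤ)), Int.toNat_natCast] at h3
  exact h3

end AuxStmt16

theorem stmt16 {B : Type*} [CommRing B] {n : ℕ} (mo : MonOrd n)
    (δ : Finset (Fin n →₀ ℕ))
    (hstd : ∀ α ∉ δ, ∀ γ : Fin n →₀ ℕ, α + γ ∉ δ)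
    (a : (Fin n →₀ ℕ) → (Fin n →₀ ℕ) → B)
    (I : Ideal (MvPolynomial (Fin n) B))
    (hRGB : IsReducedGB mo (↑δ : Set (Fin n →₀ ℕ)) I
      (fun α => MvPolynomial.monomial α 1 - ∑ β ∈ δ, MvPolynomial.monomial β (a α β)))
    (hborder : ∀ α ∈ StdBorder (↑δ : Set (Fin n →₀ ℕ)),
      (MvPolynomial.monomial α (1 : B) - ∑ β ∈ δ, MvPolynomial.monomial β (a α β)) ∈ I ∧
      ∀ β ∈ δ, a α β ≠ 0 → mo.lt β α)
    (l : (Fin n → ℤ) →ₗ[ℤ] ℤ)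
    (L : (Fin n →₀ ℕ) → ℤ) (hL : ∀ v : Fin n →₀ ℕ, L v = l (fun k => (v k : ℤ)))
    (hl : ∀ α ∈ StdBorder (↑δ : Set (Fin n →₀ ℕ)), ∀ β ∈ δ, a α β ≠ 0 → L β < L α)
    (J : Ideal (MvPolynomial (Fin n) (Polynomial B)))
    (hJ : J = Ideal.span {p | ∃ α, StdCorner (↑δ : Set (Fin n →₀ ℕ)) α ∧
      p = MvPolynomial.monomial α (1 : Polynomial B) -
        ∑ β ∈ δ, MvPolynomial.monomial β (Polynomial.monomial (L α - L β).toNat (a α β))}) :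
    ∀ α ∈ StdBorder (↑δ : Set (Fin n →₀ ℕ)),
      ∃ h ∈ J, (h : MvPolynomial (Fin n) (Polynomial B)).coeff α = 1 ∧
        (∀ β ∈ (h : MvPolynomial (Fin n) (Polynomial B)).support, β ≠ α → β ∈ δ) ∧
        (∀ β ∈ δ, (h : MvPolynomial (Fin n) (Polynomial B)).coeff β =
          Polynomial.monomial (L α - L β).toNat (-(a α β))) ∧
        ∀ h' ∈ J, (h' : MvPolynomial (Fin n) (Polynomial B)).coeff α = 1 →
          (∀ β ∈ (h' : MvPolynomial (Fin n) (Polynomial B)).support, β ≠ α → β ∈ δ) →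
          h' = h := by
  classical
  intro α hα
  have hLadd : ∀ u v, L (u + v) = L u + L v := L_add l L hL
  have hIz : ∀ g ∈ I, (∀ β ∈ g.support, β ∈ δ) → g = 0 := I_delta_zero mo δ I hRGB.1
  have hfI : ∀ c, StdCorner (↑δ : Set (Fin n →₀ ℕ)) c →
      (MvPolynomial.monomial c 1 - ∑ β ∈ δ, MvPolynomial.monomial β (a c β)) ∈ I :=
    fun c hc => (hRGB.2.1 c hc).1
  have hlc : ∀ c, StdCorner (↑δ : Set (Fin n →₀ ℕ)) c → ∀ β ∈ δ, a c β ≠ 0 → L β < L c := by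
    intro c hc β hβ hne
    exact hl c (corner_mem_border δ hstd ⟨β, hβ⟩ c hc) β hβ hne
  have hJz : ∀ g ∈ J, (∀ β ∈ g.support, β ∈ δ) → g = 0 :=
    J_delta_zero mo δ a L hlc hLadd I hRGB.1 hfI J hJ
  set gt : (Fin n →₀ ℕ) → MvPolynomial (Fin n) (Polynomial B) := fun α' =>
    MvPolynomial.monomial α' (1 : Polynomial B) -
      ∑ β ∈ δ, MvPolynomial.monomial β (Polynomial.monomial (L α' - L β).toNat (a α' β))
    with hgt
  have hgen : ∀ α', StdCorner (↑δ : Set (Fin n →₀ ℕ)) α' → gt α' ∈ J := by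
    intro α' h
    rw [hJ]
    exact Ideal.subset_span ⟨α', h, rfl⟩
  set Bf : Finset (Fin n →₀ ℕ) :=
    (δ ×ˢ (Finset.univ : Finset (Fin n))).image (fun p => p.1 + Finsupp.single p.2 1) with hBfdef
  have hBf : ∀ α' ∈ StdBorder (↑δ : Set (Fin n →₀ ℕ)), α' ∈ Bf := by
    rintro α' ⟨h1, i, β, hβ, he⟩
    exact Finset.mem_image.2 ⟨(β, i),
      Finset.mem_product.2 ⟨by exact_mod_cast hβ, Finset.mem_univ i⟩, he⟩
  have hmlt : ∀ μ α', μ ∈ StdBorder (↑δ : Set (Fin n →₀ ℕ)) → mo.lt μ α' →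
      (Bf.filter (fun x => mo.lt x μ)).card < (Bf.filter (fun x => mo.lt x α')).card := by
    intro μ α' hμ hltμ
    apply Finset.card_lt_card
    rw [Finset.ssubset_iff_of_subset]
    · exact ⟨μ, Finset.mem_filter.2 ⟨hBf μ hμ, hltμ⟩,
        fun hmem => mo.lt_irrefl μ (Finset.mem_filter.1 hmem).2⟩
    · intro x hx
      obtain ⟨h1, h2⟩ := Finset.mem_filter.1 hx
      exact Finset.mem_filter.2 ⟨h1, mo.lt_trans h2 hltμ⟩
  have key : ∀ N : ℕ, ∀ α', α' ∈ StdBorder (↑δ : Set (Fin n →₀ ℕ)) →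
      (Bf.filter (fun x => mo.lt x α')).card ≤ N → gt α' ∈ J := by
    intro N
    induction N with
    | zero =>
      intro α' hα' hcard
      by_cases hc : StdCorner (↑δ : Set (Fin n →₀ ℕ)) α'
      · exact hgen α' hc
      · obtain ⟨j, μ, hμe, hμb, hlt⟩ := border_step mo δ hstd α' hα' hc
        have hpos : 0 < (Bf.filter (fun x => mo.lt x α')).card :=
          Finset.card_pos.2 ⟨μ, Finset.mem_filter.2 ⟨hBf μ hμb, hlt⟩⟩
        omega
    | succ N ih =>
      intro α' hα' hcard
      by_cases hc : StdCorner (↑δ : Set (Fin n →₀ ℕ)) α'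
      · exact hgen α' hc
      obtain ⟨j, μ, hμe, hμb, hlt⟩ := border_step mo δ hstd α' hα' hc
      subst hμe
      have harel := a_relation δ a I hIz (fun x hx => (hborder x hx).1) μ j hμb hα'
      have htrel := ta_relation δ a L hLadd hl μ j hμb hα' harel
      have hgμ : gt μ ∈ J := ih μ hμb (by have := hmlt μ _ hμb hlt; omega)
      have hid := key_identity δ
        (fun u v => Polynomial.monomial (L u - L v).toNat (a u v)) μ j
      have hfinal : gt (μ + Finsupp.single j 1) =
          (MvPolynomial.monomial (Finsupp.single j 1) (1 : Polynomial B)) * gt μ +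
          ∑ β ∈ δ.filter (fun β => β + Finsupp.single j 1 ∉ δ),
            MvPolynomial.C (Polynomial.monomial (L μ - L β).toNat (a μ β)) *
              gt (β + Finsupp.single j 1) := by
        simp only [hgt]
        rw [hid]
        congr 1
        refine Finset.sum_congr rfl fun γ hγ => ?_
        rw [htrel γ hγ]
      rw [hfinal]
      refine Submodule.add_mem J (Ideal.mul_mem_left J _ hgμ)
        (Submodule.sum_mem J fun β hβ => ?_)
      obtain ⟨hβδ, hβe⟩ := Finset.mem_filter.1 hβ
      by_cases h0 : a μ β = 0
      · rw [h0, Polynomial.monomial_zero_right, map_zero, zero_mul]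
        exact Submodule.zero_mem J
      · have hβb : β + Finsupp.single j 1 ∈ StdBorder (↑δ : Set (Fin n →₀ ℕ)) :=
          ⟨by simpa using hβe, j, β, by simpa using hβδ, rfl⟩
        have hltβ : mo.lt (β + Finsupp.single j 1) (μ + Finsupp.single j 1) :=
          mo.add_right _ ((hborder μ hμb).2 β hβδ h0)
        have hgb : gt (β + Finsupp.single j 1) ∈ J :=
          ih _ hβb (by have := hmlt _ _ hβb hltβ; omega)
        exact Ideal.mul_mem_left J _ hgb
  have hαδ : α ∉ δ := fun h => hα.1 (by exact_mod_cast h)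
  have hco : ∀ ρ, (gt α).coeff ρ = (if α = ρ then 1 else 0) -
      (if ρ ∈ δ then Polynomial.monomial (L α - L ρ).toNat (a α ρ) else 0) := by
    intro ρ
    simp only [hgt, MvPolynomial.coeff_sub, MvPolynomial.coeff_monomial]
    congr 1
    rw [MvPolynomial.coeff_sum]
    simp only [MvPolynomial.coeff_monomial]
    rw [Finset.sum_ite_eq' δ ρ]
  have hmem : gt α ∈ J := key _ α hα le_rfl
  have hcoeffα : (gt α).coeff α = 1 := by
    rw [hco α, if_pos rfl, if_neg hαδ, sub_zero]
  have hsupp : ∀ β ∈ (gt α).support, β ≠ α → β ∈ δ := by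
    intro β hβ hβα
    rw [MvPolynomial.mem_support_iff] at hβ
    by_contra hβδ
    rw [hco β, if_neg (fun h => hβα h.symm), if_neg hβδ, sub_zero] at hβ
    exact hβ rfl
  refine ⟨gt α, hmem, hcoeffα, hsupp, ?_, ?_⟩
  · intro β hβ
    have hβα : β ≠ α := fun h => hαδ (h ▸ hβ)
    rw [hco β, if_neg (fun h => hβα h.symm), if_pos hβ, zero_sub, ← map_neg]
  · intro h' hh' hco1 hsup1
    have hdmem : h' - gt α ∈ J := Submodule.sub_mem J hh' hmem
    have hdsupp : ∀ ρ ∈ (h' - gt α).support, ρ ∈ δ := by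
      intro ρ hρ
      rw [MvPolynomial.mem_support_iff, MvPolynomial.coeff_sub] at hρ
      by_cases hρα : ρ = α
      · subst hρα
        rw [hco1, hcoeffα, sub_self] at hρ
        exact absurd rfl hρ
      · by_cases h1 : h'.coeff ρ = 0
        · have h2 : (gt α).coeff ρ ≠ 0 := fun h => hρ (by rw [h1, h, sub_zero])
          exact hsupp ρ (MvPolynomial.mem_support_iff.2 h2) hρα
        · exact hsup1 ρ (MvPolynomial.mem_support_iff.2 h1) hρα
    have := hJz _ hdmem hdsupp
    exact sub_eq_zero.1 this
end
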